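/- For n = 3, A_{21}⁺ ∘ A_{21}⁻ = m_g, where g = −((x_{31}−x_{21}+1)(x_{32}−x_{21}+1)(x_{33}−x_{21}+1)/(x_{22}−x_{21}+1))·((x_{11}−x_{21})/(x_{22}−x_{21})) ∈ L; moreover g is not a polynomial, i.e. g ∉ Λ. In particular 𝒜(gl_3) contains a multiplication operator by a non-polynomial rational function, which commutes with m_γ for every γ ∈ Λ. -/

import Mathlib

open scoped BigOperators
open MvPolynomial

set_option maxHeartbeats 1000000
set_option synthInstance.maxHeartbeats 400000

noncomputable section

/-- The polynomial ring `Λ = ℂ[x_{ki}]` (variables indexed by pairs `(k, i)`). -/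
abbrev Lam : Type := MvPolynomial (ℕ × ℕ) ℂ

/-- `L`, the field of fractions of `Λ`. -/
abbrev L : Type := FractionRing Lam

/-- The variable `x_{ki}` as an element of `L`. -/
def x (k i : ℕ) : L := algebraMap Lam L (X (k, i))

/-- The algebra automorphism of `Λ` sending `x_v ↦ x_v - 1` and fixing the other variables. -/
def shiftEquiv (v : ℕ × ℕ) : Lam ≃ₐ[ℂ] Lam :=
  AlgEquiv.ofAlgHom
    (aeval (fun w => if w = v then X w - 1 else X w))
    (aeval (fun w => if w = v then X w + 1 else X w))
    (by apply MvPolynomial.algHom_ext; intro w; by_cases h : w = v <;> simp [h])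
    (by apply MvPolynomial.algHom_ext; intro w; by_cases h : w = v <;> simp [h])

/-- The automorphism `δ^{ki}` of `L`, determined by `δ^{ki}(x_{ℓj}) = x_{ℓj} - δ_{ℓk}δ_{ij}`. -/
def δ (k i : ℕ) : L ≃ₐ[ℂ] L := IsFractionRing.algEquivOfAlgEquiv (shiftEquiv (k, i))

/-- Multiplication by `a ∈ L` as a `ℂ`-linear endomorphism `m_a` of `L`. -/
def mulOp (a : L) : Module.End ℂ L := LinearMap.mulLeft ℂ a

/-- A field automorphism of `L` as a `ℂ`-linear endomorphism of `L`. -/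
def lin (e : L ≃ₐ[ℂ] L) : Module.End ℂ L := e.toLinearMap

/-- The rational function `a_{ki}^+`. -/
def aP (k i : ℕ) : L :=
  -((∏ j ∈ Finset.Icc 1 (k + 1), (x (k + 1) j - x k i)) /
    ∏ j ∈ (Finset.Icc 1 k).erase i, (x k j - x k i))

/-- The rational function `a_{ki}^-`. -/
def aM (k i : ℕ) : L :=
  (∏ j ∈ Finset.Icc 1 (k - 1), (x (k - 1) j - x k i)) /
    ∏ j ∈ (Finset.Icc 1 k).erase i, (x k j - x k i)

/-- The operator `A_{ki}^+ = δ^{ki} ∘ m_{a_{ki}^+}`. -/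
def Ap (k i : ℕ) : Module.End ℂ L := lin (δ k i) * mulOp (aP k i)

/-- The operator `A_{ki}^- = (δ^{ki})^{-1} ∘ m_{a_{ki}^-}`. -/
def Am (k i : ℕ) : Module.End ℂ L := lin (δ k i).symm * mulOp (aM k i)

/-- The operator `X_k^+ = ∑_{i=1}^k A_{ki}^+`. -/
def Xp (k : ℕ) : Module.End ℂ L := ∑ i ∈ Finset.Icc 1 k, Ap k i

/-- The operator `X_k^- = ∑_{i=1}^k A_{ki}^-`. -/
def Xm (k : ℕ) : Module.End ℂ L := ∑ i ∈ Finset.Icc 1 k, Am k i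

/-- The operator `X_{kk}`. -/
def Xd (k : ℕ) : Module.End ℂ L :=
  mulOp ((∑ j ∈ Finset.Icc 1 k, (x k j + (j : L) - 1)) -
    ∑ i ∈ Finset.Icc 1 (k - 1), (x (k - 1) i + (i : L) - 1))

/-- The Vandermonde polynomial `∏_{1 ≤ i < j ≤ k} (x_{ki} - x_{kj})`, as an element of `L`. -/
def vand (k : ℕ) : L :=
  ∏ p ∈ (Finset.Icc 1 k ×ˢ Finset.Icc 1 k).filter (fun p => p.1 < p.2),
    (x k p.1 - x k p.2)

/-- The operator `𝒱_k = m_{∏_{i<j}(x_{ki} - x_{kj})}`. -/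
def Vop (k : ℕ) : Module.End ℂ L := mulOp (vand k)

/-- The generating set of `U_n`: the `X_k^±` for `1 ≤ k ≤ n-1` and the `X_{kk}` for `1 ≤ k ≤ n`. -/
def Ugens (n : ℕ) : Set (Module.End ℂ L) :=
  {u | ∃ k, 1 ≤ k ∧ k + 1 ≤ n ∧ (u = Xp k ∨ u = Xm k)} ∪
    {u | ∃ k, 1 ≤ k ∧ k ≤ n ∧ u = Xd k}

/-- `U_n`, the Gelfand–Tsetlin realization of `U(gl_n)` inside `End_ℂ(L)`. -/
def Ualg (n : ℕ) : Subalgebra ℂ (Module.End ℂ L) := Algebra.adjoin ℂ (Ugens n)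

/-- `𝒜(gl_n)`, the subalgebra generated by `U_n` together with `𝒱_2, …, 𝒱_n`. -/
def Agl (n : ℕ) : Subalgebra ℂ (Module.End ℂ L) :=
  Algebra.adjoin ℂ (Ugens n ∪ {u | ∃ k, 2 ≤ k ∧ k ≤ n ∧ u = Vop k})

/-- The non-polynomial rational function `g` with `A_{21}⁺ ∘ A_{21}⁻ = m_g`. -/
def gRat : L :=
  -(((x 3 1 - x 2 1 + 1) * (x 3 2 - x 2 1 + 1) * (x 3 3 - x 2 1 + 1)) /
      (x 2 2 - x 2 1 + 1) * ((x 1 1 - x 2 1) / (x 2 2 - x 2 1)))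



lemma x_def (k i : ℕ) : x k i = algebraMap Lam L (X (k, i)) := rfl

lemma δ_x (k i l j : ℕ) :
    δ k i (x l j) = if (l, j) = (k, i) then x l j - 1 else x l j := by
  unfold δ x
  rw [IsFractionRing.algEquivOfAlgEquiv_algebraMap]
  show algebraMap Lam L (aeval (fun w => if w = (k, i) then X w - 1 else X w) (X (l, j))) = _
  rw [aeval_X]
  by_cases h : (l, j) = (k, i) <;> simp [h, map_sub, map_one]

lemma x_ne (k i l j : ℕ) (h : (k, i) ≠ (l, j)) : x k i - x l j ≠ 0 := by
  rw [sub_ne_zero]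
  unfold x
  intro hx
  exact h (MvPolynomial.X_injective (IsFractionRing.injective Lam L hx))

lemma aP21 : aP 2 1 = -((x 3 1 - x 2 1) * ((x 3 2 - x 2 1) * (x 3 3 - x 2 1)) / (x 2 2 - x 2 1)) := by
  unfold aP
  rw [show (Finset.Icc 1 3 : Finset ℕ) = {1, 2, 3} by decide,
      show ((Finset.Icc 1 2).erase 1 : Finset ℕ) = {2} by decide]
  simp [Finset.prod_insert, Finset.mem_insert]

lemma aM21 : aM 2 1 = (x 1 1 - x 2 1) / (x 2 2 - x 2 1) := by
  unfold aM
  rw [show (Finset.Icc 1 (2 - 1) : Finset ℕ) = {1} by decide,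
      show ((Finset.Icc 1 2).erase 1 : Finset ℕ) = {2} by decide]
  simp

lemma key : δ 2 1 (aP 2 1) * aM 2 1 = gRat := by
  rw [aP21, aM21]
  simp only [map_neg, map_div₀, map_mul, map_sub, δ_x, Prod.mk.injEq]
  norm_num [gRat]
  ring_nf
  exact Or.inl trivial

lemma mulOp_mul (a b : L) : mulOp a * mulOp b = mulOp (a * b) := by
  ext f
  simp [mulOp, Module.End.mul_apply, LinearMap.mulLeft_apply, mul_assoc]

/-- `A_{21}⁺ ∘ A_{21}⁻ = m_g`, `g` is not a polynomial, and `m_g` commutes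
with `m_γ` for every `γ ∈ Λ`. -/
theorem A21P_A21M_is_nonpolynomial_multiplication :
    Ap 2 1 * Am 2 1 = mulOp gRat ∧
    gRat ∉ Set.range (algebraMap Lam L) ∧
    ∀ γ : Lam, mulOp gRat * mulOp (algebraMap Lam L γ) =
      mulOp (algebraMap Lam L γ) * mulOp gRat := by
  refine ⟨?_, ?_, ?_⟩
  · ext f
    simp only [Ap, Am, mulOp, lin, Module.End.mul_apply, LinearMap.mulLeft_apply,
      AlgEquiv.toLinearMap_apply, map_mul, AlgEquiv.apply_symm_apply]
    rw [← key]; ring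
  · rintro ⟨p, hp⟩
    have h1 : x 2 2 - x 2 1 + 1 ≠ 0 := by
      intro h
      have : x 2 2 - x 2 1 = -1 := by linear_combination h
      have h2 := IsFractionRing.injective Lam L
        (show algebraMap Lam L (X (2,2) - X (2,1)) = algebraMap Lam L (-1) by
          simpa [map_sub, x_def] using this)
      have := congrArg (eval (fun _ => (0:ℂ))) h2
      simp at this
    have h2 : x 2 2 - x 2 1 ≠ 0 := x_ne 2 2 2 1 (by decide)
    have hNum : gRat * ((x 2 2 - x 2 1 + 1) * (x 2 2 - x 2 1)) =
        -((x 3 1 - x 2 1 + 1) * (x 3 2 - x 2 1 + 1) * (x 3 3 - x 2 1 + 1)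
          * (x 1 1 - x 2 1)) := by
      have lem : ∀ A B C D : L, B ≠ 0 → D ≠ 0 → -(A / B * (C / D)) * (B * D) = -(A * C) := by
        intro A B C D hB hD
        linear_combination (-(A * C * D * D⁻¹)) * mul_inv_cancel₀ hB +
          (-(A * C)) * mul_inv_cancel₀ hD
      exact lem _ _ _ _ h1 h2
    rw [← hp] at hNum
    have hEq : algebraMap Lam L
        (p * ((X (2,2) - X (2,1) + 1) * (X (2,2) - X (2,1)))) = algebraMap Lam L
        (-((X (3,1) - X (2,1) + 1) * (X (3,2) - X (2,1) + 1) * (X (3,3) - X (2,1) + 1)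
          * (X (1,1) - X (2,1)))) := by
      simp only [map_mul, map_add, map_sub, map_one, map_neg, ← x_def]
      exact hNum
    have hpoly := IsFractionRing.injective Lam L hEq
    have := congrArg (eval (fun v => if v = ((1:ℕ),(1:ℕ)) then (1:ℂ) else 0)) hpoly
    simp at this
  · intro γ
    rw [mulOp_mul, mulOp_mul, mul_comm]
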